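/- arXiv:2104.06069 — 4 statements merged into one kernel-verified Lean document; each statement's English description precedes it below -/
import Mathlib

section
/- Let ρ ∈ [0,1) and let {b_t}_{t≥1} be a sequence of nonnegative real numbers. Then for every k ≥ 1, Σ_{t=1}^k (Σ_{s=1}^t ρ^{t−s} b_s)² ≤ (1/(1−ρ)) · Σ_{t=1}^k Σ_{s=1}^t ρ^{t−s} b_s². -/
open Finset

lemma geom_icc_le (ρ : ℝ) (hρ0 : 0 ≤ ρ) (hρ1 : ρ < 1) (t : ℕ) :
    ∑ s ∈ Icc 1 t, ρ ^ (t - s) ≤ 1 / (1 - ρ) := by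
  have h1 : (0:ℝ) < 1 - ρ := by linarith
  have : ∑ s ∈ Icc 1 t, ρ ^ (t - s) = ∑ j ∈ range t, ρ ^ j := by
    rw [← Finset.sum_range_reflect]
    rw [← Finset.Ico_add_one_right_eq_Icc, Finset.sum_Ico_eq_sum_range]
    apply Finset.sum_congr (by congr 1) fun i _ => by congr 1; omega
  rw [this, le_div_iff₀ h1]
  have hgs := geom_sum_mul ρ t
  have hpt : 0 ≤ ρ ^ t := pow_nonneg hρ0 t
  nlinarith

/-- **Key intermediate step of the sequence lemma.** If `ρ ∈ [0,1)` and `{b_t}_{t≥1}` is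
nonnegative, then
`∑_{t=1}^k (∑_{s=1}^t ρ^(t-s) b_s)² ≤ (1/(1-ρ)) ∑_{t=1}^k ∑_{s=1}^t ρ^(t-s) b_s²`. -/
theorem sq_sum_geometric_convolution_le
    (ρ : ℝ) (hρ0 : 0 ≤ ρ) (hρ1 : ρ < 1)
    (b : ℕ → ℝ) (hb : ∀ t, 1 ≤ t → 0 ≤ b t)
    (k : ℕ) (hk : 1 ≤ k) :
    ∑ t ∈ Icc 1 k, (∑ s ∈ Icc 1 t, ρ ^ (t - s) * b s) ^ 2
      ≤ (1 / (1 - ρ)) * ∑ t ∈ Icc 1 k, ∑ s ∈ Icc 1 t, ρ ^ (t - s) * (b s) ^ 2 := by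
  have h1 : (0:ℝ) < 1 - ρ := by linarith
  rw [Finset.mul_sum]
  apply Finset.sum_le_sum
  intro t _
  -- Cauchy–Schwarz with f s = √(ρ^(t-s)), g s = √(ρ^(t-s)) * b s
  have key : (∑ s ∈ Icc 1 t, ρ ^ (t - s) * b s) ^ 2
      ≤ (∑ s ∈ Icc 1 t, ρ ^ (t - s)) * ∑ s ∈ Icc 1 t, ρ ^ (t - s) * (b s) ^ 2 := by
    have := Finset.sum_mul_sq_le_sq_mul_sq (Icc 1 t)
      (fun s => Real.sqrt (ρ ^ (t - s))) (fun s => Real.sqrt (ρ ^ (t - s)) * b s)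
    have e1 : ∀ s ∈ Icc 1 t, Real.sqrt (ρ ^ (t - s)) * (Real.sqrt (ρ ^ (t - s)) * b s)
        = ρ ^ (t - s) * b s := by
      intro s _
      rw [← mul_assoc, Real.mul_self_sqrt (pow_nonneg hρ0 _)]
    have e2 : ∀ s ∈ Icc 1 t, Real.sqrt (ρ ^ (t - s)) ^ 2 = ρ ^ (t - s) := by
      intro s _
      exact Real.sq_sqrt (pow_nonneg hρ0 _)
    have e3 : ∀ s ∈ Icc 1 t, (Real.sqrt (ρ ^ (t - s)) * b s) ^ 2
        = ρ ^ (t - s) * (b s) ^ 2 := by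
      intro s _
      rw [mul_pow, Real.sq_sqrt (pow_nonneg hρ0 _)]
    rwa [Finset.sum_congr rfl e1, Finset.sum_congr rfl e2, Finset.sum_congr rfl e3] at this
  have hinner : 0 ≤ ∑ s ∈ Icc 1 t, ρ ^ (t - s) * (b s) ^ 2 := by
    apply Finset.sum_nonneg
    intro s _
    exact mul_nonneg (pow_nonneg hρ0 _) (sq_nonneg _)
  calc (∑ s ∈ Icc 1 t, ρ ^ (t - s) * b s) ^ 2
      ≤ (∑ s ∈ Icc 1 t, ρ ^ (t - s)) * ∑ s ∈ Icc 1 t, ρ ^ (t - s) * (b s) ^ 2 := key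
    _ ≤ (1 / (1 - ρ)) * ∑ s ∈ Icc 1 t, ρ ^ (t - s) * (b s) ^ 2 :=
        mul_le_mul_of_nonneg_right (geom_icc_le ρ hρ0 hρ1 t) hinner
end

section
/- Let E be a real normed vector space, let β ∈ [0,1), and let u_0, u_1, …, u_T ∈ E. Then Σ_{t=0}^T ‖Σ_{s=0}^t β^{t−s} u_s‖² ≤ (1/(1−β)²) · Σ_{s=0}^T ‖u_s‖². -/
open Finset

lemma geom_aux {β : ℝ} (hβ0 : 0 ≤ β) (hβ1 : β < 1) (n : ℕ) :
    ∑ k ∈ range n, β ^ k ≤ 1 / (1 - β) := by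
  have h1 : (0:ℝ) < 1 - β := by linarith
  rw [geom_sum_eq hβ1.ne n]
  have : (β ^ n - 1) / (β - 1) = (1 - β ^ n) / (1 - β) := by
    rw [div_eq_div_iff (by linarith) h1.ne']; ring
  rw [this]
  gcongr
  nlinarith [pow_nonneg hβ0 n]

/-- **Vector-valued sequence lemma.** For a real normed vector space `E`, `β ∈ [0,1)` and
`u_0, …, u_T ∈ E`, one has
`∑_{t=0}^T ‖∑_{s=0}^t β^(t-s) u_s‖² ≤ (1/(1-β)²) ∑_{s=0}^T ‖u_s‖²`. -/
theorem sum_sq_norm_geometric_convolution_le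
    {E : Type*} [NormedAddCommGroup E] [NormedSpace ℝ E]
    (β : ℝ) (hβ0 : 0 ≤ β) (hβ1 : β < 1) (T : ℕ) (u : ℕ → E) :
    ∑ t ∈ range (T + 1), ‖∑ s ∈ range (t + 1), β ^ (t - s) • u s‖ ^ 2
      ≤ (1 / (1 - β) ^ 2) * ∑ s ∈ range (T + 1), ‖u s‖ ^ 2 := by
  have h1 : (0:ℝ) < 1 - β := by linarith
  set b : ℕ → ℝ := fun s => ‖u s‖ with hb
  -- Step 1: bound each norm by scalar sum, then Cauchy-Schwarz
  have step1 : ∀ t, ‖∑ s ∈ range (t + 1), β ^ (t - s) • u s‖ ^ 2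
      ≤ (1 / (1 - β)) * ∑ s ∈ range (t + 1), β ^ (t - s) * b s ^ 2 := by
    intro t
    have hnorm : ‖∑ s ∈ range (t + 1), β ^ (t - s) • u s‖
        ≤ ∑ s ∈ range (t + 1), β ^ (t - s) * b s := by
      refine (norm_sum_le _ _).trans_eq ?_
      refine Finset.sum_congr rfl fun s _ => ?_
      rw [norm_smul, Real.norm_eq_abs, abs_of_nonneg (pow_nonneg hβ0 _)]
    have hsq : ‖∑ s ∈ range (t + 1), β ^ (t - s) • u s‖ ^ 2
        ≤ (∑ s ∈ range (t + 1), β ^ (t - s) * b s) ^ 2 :=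
      pow_le_pow_left₀ (norm_nonneg _) hnorm 2
    refine hsq.trans ?_
    have hcs : (∑ s ∈ range (t + 1), β ^ (t - s) * b s) ^ 2
        ≤ (∑ s ∈ range (t + 1), β ^ (t - s)) *
          ∑ s ∈ range (t + 1), β ^ (t - s) * b s ^ 2 := by
      refine Finset.sum_sq_le_sum_mul_sum_of_sq_eq_mul _
        (fun s _ => pow_nonneg hβ0 _)
        (fun s _ => mul_nonneg (pow_nonneg hβ0 _) (sq_nonneg _))
        (fun s _ => by ring)
    refine hcs.trans ?_
    have hgeom : ∑ s ∈ range (t + 1), β ^ (t - s) ≤ 1 / (1 - β) := by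
      have heq : ∑ s ∈ range (t + 1), β ^ (t - s) = ∑ k ∈ range (t + 1), β ^ k := by
        rw [← Finset.sum_range_reflect (fun j => β ^ j) (t + 1)]
        refine Finset.sum_congr rfl fun j hj => ?_
        rw [Finset.mem_range] at hj
        congr 1
      rw [heq]
      exact geom_aux hβ0 hβ1 _
    exact mul_le_mul_of_nonneg_right hgeom (Finset.sum_nonneg fun s _ =>
      mul_nonneg (pow_nonneg hβ0 _) (sq_nonneg _))
  calc ∑ t ∈ range (T + 1), ‖∑ s ∈ range (t + 1), β ^ (t - s) • u s‖ ^ 2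
      ≤ ∑ t ∈ range (T + 1), (1 / (1 - β)) * ∑ s ∈ range (t + 1), β ^ (t - s) * b s ^ 2 :=
        Finset.sum_le_sum fun t _ => step1 t
    _ = (1 / (1 - β)) * ∑ t ∈ range (T + 1), ∑ s ∈ range (t + 1), β ^ (t - s) * b s ^ 2 := by
        rw [Finset.mul_sum]
    _ = (1 / (1 - β)) * ∑ s ∈ range (T + 1), ∑ t ∈ Ico s (T + 1), β ^ (t - s) * b s ^ 2 := by
        congr 1
        have := Finset.sum_Ico_Ico_comm 0 (T + 1) (fun s t => β ^ (t - s) * b s ^ 2)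
        simp only [Nat.Ico_zero_eq_range] at this
        rw [← this]
    _ ≤ (1 / (1 - β)) * ∑ s ∈ range (T + 1), (1 / (1 - β)) * b s ^ 2 := by
        refine mul_le_mul_of_nonneg_left (Finset.sum_le_sum fun s hs => ?_)
          (by positivity)
        rw [← Finset.sum_mul]
        refine mul_le_mul_of_nonneg_right ?_ (sq_nonneg _)
        calc ∑ t ∈ Ico s (T + 1), β ^ (t - s)
            = ∑ k ∈ range (T + 1 - s), β ^ k := by
              rw [Finset.sum_Ico_eq_sum_range]
              refine Finset.sum_congr rfl fun k _ => by congr 1; omega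
          _ ≤ 1 / (1 - β) := geom_aux hβ0 hβ1 _
    _ = (1 / (1 - β) ^ 2) * ∑ s ∈ range (T + 1), ‖u s‖ ^ 2 := by
        rw [← Finset.mul_sum, ← mul_assoc]
        congr 1
        field_simp
end

section
/- Let E be a real normed vector space, let β ∈ [0,1), and let δ_{−1}, δ_0, δ_1, …, δ_T ∈ E with δ_{−1} = 0. Then Σ_{t=0}^T ‖Σ_{s=0}^t β^{t−s} (δ_{s−1} − δ_s)‖² ≤ (4/(1−β)²) · Σ_{s=0}^T ‖δ_s‖². -/
open Finset

section Aux

variable {β : ℝ}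

private lemma geo_le (hβ0 : 0 ≤ β) (hβ1 : β < 1) (n : ℕ) :
    ∑ i ∈ range n, β ^ i ≤ 1 / (1 - β) := by
  have h := Summable.sum_le_tsum (range n) (fun i _ => pow_nonneg hβ0 i)
    (summable_geometric_of_lt_one hβ0 hβ1)
  rw [tsum_geometric_of_lt_one hβ0 hβ1] at h
  simpa [one_div] using h

/-- Cauchy–Schwarz step. -/
private lemma cs_step (hβ0 : 0 ≤ β) (hβ1 : β < 1) (a : ℕ → ℝ) (ha : ∀ s, 0 ≤ a s) (t : ℕ) :
    (∑ s ∈ range (t + 1), β ^ (t - s) * a s) ^ 2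
      ≤ (1 / (1 - β)) * ∑ s ∈ range (t + 1), β ^ (t - s) * a s ^ 2 := by
  have h := sum_sq_le_sum_mul_sum_of_sq_eq_mul (range (t + 1))
      (r := fun s => β ^ (t - s) * a s) (f := fun s => β ^ (t - s))
      (g := fun s => β ^ (t - s) * a s ^ 2)
      (fun i _ => pow_nonneg hβ0 _)
      (fun i _ => mul_nonneg (pow_nonneg hβ0 _) (sq_nonneg _))
      (fun i _ => by ring)
  refine h.trans ?_
  have h1 : ∑ s ∈ range (t + 1), β ^ (t - s) ≤ 1 / (1 - β) := by
    have he : ∑ s ∈ range (t + 1), β ^ (t - s) = ∑ i ∈ range (t + 1), β ^ i := by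
      rw [← Finset.sum_range_reflect (fun i => β ^ i) (t + 1)]
      simp
    rw [he]
    exact geo_le hβ0 hβ1 (t + 1)
  have h2 : 0 ≤ ∑ s ∈ range (t + 1), β ^ (t - s) * a s ^ 2 :=
    Finset.sum_nonneg fun i _ => mul_nonneg (pow_nonneg hβ0 _) (sq_nonneg _)
  exact mul_le_mul_of_nonneg_right h1 h2

/-- Swap the double sum and bound the geometric tail. -/
private lemma swap_step (hβ0 : 0 ≤ β) (hβ1 : β < 1) (b : ℕ → ℝ) (hb : ∀ s, 0 ≤ b s) (T : ℕ) :
    ∑ t ∈ range (T + 1), ∑ s ∈ range (t + 1), β ^ (t - s) * b s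
      ≤ (1 / (1 - β)) * ∑ s ∈ range (T + 1), b s := by
  have hswap : ∑ t ∈ range (T + 1), ∑ s ∈ range (t + 1), β ^ (t - s) * b s
      = ∑ s ∈ range (T + 1), ∑ t ∈ Finset.Ico s (T + 1), β ^ (t - s) * b s := by
    simp only [← Nat.Ico_zero_eq_range]
    exact (Finset.sum_Ico_Ico_comm 0 (T + 1) (fun s t => β ^ (t - s) * b s)).symm
  rw [hswap, Finset.mul_sum]
  refine Finset.sum_le_sum fun s hs => ?_
  have he : ∑ t ∈ Finset.Ico s (T + 1), β ^ (t - s) * b s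
      = (∑ k ∈ range (T + 1 - s), β ^ k) * b s := by
    rw [Finset.sum_Ico_eq_sum_range, Finset.sum_mul]
    exact Finset.sum_congr rfl fun k _ => by rw [Nat.add_sub_cancel_left]
  rw [he, one_div, ← one_div]
  exact mul_le_mul_of_nonneg_right (geo_le hβ0 hβ1 _) (hb s)

/-- Key estimate: sum of squares of geometric convolutions. -/
private lemma conv_sq (hβ0 : 0 ≤ β) (hβ1 : β < 1) (a : ℕ → ℝ) (ha : ∀ s, 0 ≤ a s) (T : ℕ) :
    ∑ t ∈ range (T + 1), (∑ s ∈ range (t + 1), β ^ (t - s) * a s) ^ 2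
      ≤ (1 / (1 - β)) ^ 2 * ∑ s ∈ range (T + 1), a s ^ 2 := by
  calc ∑ t ∈ range (T + 1), (∑ s ∈ range (t + 1), β ^ (t - s) * a s) ^ 2
      ≤ ∑ t ∈ range (T + 1), (1 / (1 - β)) * ∑ s ∈ range (t + 1), β ^ (t - s) * a s ^ 2 :=
        Finset.sum_le_sum fun t _ => cs_step hβ0 hβ1 a ha t
    _ = (1 / (1 - β)) * ∑ t ∈ range (T + 1), ∑ s ∈ range (t + 1), β ^ (t - s) * a s ^ 2 := by
        rw [Finset.mul_sum]
    _ ≤ (1 / (1 - β)) * ((1 / (1 - β)) * ∑ s ∈ range (T + 1), a s ^ 2) := by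
        have h1β : (0 : ℝ) ≤ 1 / (1 - β) := div_nonneg zero_le_one (by linarith)
        exact mul_le_mul_of_nonneg_left
          (swap_step hβ0 hβ1 (fun s => a s ^ 2) (fun s => sq_nonneg _) T) h1β
    _ = (1 / (1 - β)) ^ 2 * ∑ s ∈ range (T + 1), a s ^ 2 := by ring

end Aux

/-- **Accumulated error-compensation differences.** For a real normed vector space `E`,
`β ∈ [0,1)` and `δ_{-1} = 0, δ_0, …, δ_T ∈ E`, one has
`∑_{t=0}^T ‖∑_{s=0}^t β^(t-s) (δ_{s-1} - δ_s)‖² ≤ (4/(1-β)²) ∑_{s=0}^T ‖δ_s‖²`. -/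
theorem sum_sq_norm_geometric_convolution_diff_le
    {E : Type*} [NormedAddCommGroup E] [NormedSpace ℝ E]
    (β : ℝ) (hβ0 : 0 ≤ β) (hβ1 : β < 1) (T : ℕ)
    (δ : ℤ → E) (h0 : δ (-1) = 0) :
    ∑ t ∈ range (T + 1), ‖∑ s ∈ range (t + 1), β ^ (t - s) • (δ ((s : ℤ) - 1) - δ (s : ℤ))‖ ^ 2
      ≤ (4 / (1 - β) ^ 2) * ∑ s ∈ range (T + 1), ‖δ (s : ℤ)‖ ^ 2 := by
  set a : ℕ → ℝ := fun s => ‖δ (s : ℤ)‖ with ha_def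
  have ha : ∀ s, 0 ≤ a s := fun s => norm_nonneg _
  set d : ℕ → ℝ := fun t => ∑ s ∈ range (t + 1), β ^ (t - s) * a s with hd_def
  have hd0 : ∀ t, 0 ≤ d t :=
    fun t => Finset.sum_nonneg fun s _ => mul_nonneg (pow_nonneg hβ0 _) (ha s)
  set P : ℕ → ℝ := fun t => if t = 0 then 0 else d (t - 1) with hP_def
  have hP0 : ∀ t, 0 ≤ P t := by
    intro t
    by_cases h : t = 0 <;> simp [hP_def, h, hd0]
  -- pointwise norm bound
  have hnorm : ∀ t, ‖∑ s ∈ range (t + 1), β ^ (t - s) • (δ ((s : ℤ) - 1) - δ (s : ℤ))‖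
      ≤ P t + d t := by
    intro t
    calc ‖∑ s ∈ range (t + 1), β ^ (t - s) • (δ ((s : ℤ) - 1) - δ (s : ℤ))‖
        ≤ ∑ s ∈ range (t + 1), ‖β ^ (t - s) • (δ ((s : ℤ) - 1) - δ (s : ℤ))‖ :=
          norm_sum_le _ _
      _ ≤ ∑ s ∈ range (t + 1), β ^ (t - s) * (‖δ ((s : ℤ) - 1)‖ + ‖δ (s : ℤ)‖) := by
          refine Finset.sum_le_sum fun s _ => ?_
          rw [norm_smul, Real.norm_eq_abs, abs_of_nonneg (pow_nonneg hβ0 _)]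
          exact mul_le_mul_of_nonneg_left (norm_sub_le _ _) (pow_nonneg hβ0 _)
      _ = (∑ s ∈ range (t + 1), β ^ (t - s) * ‖δ ((s : ℤ) - 1)‖)
          + ∑ s ∈ range (t + 1), β ^ (t - s) * a s := by
          rw [← Finset.sum_add_distrib]
          exact Finset.sum_congr rfl fun s _ => by ring
      _ ≤ P t + d t := by
          refine add_le_add ?_ le_rfl
          rcases Nat.eq_zero_or_pos t with ht | ht
          · subst ht
            simp [h0]
            exact hP0 0
          · obtain ⟨m, rfl⟩ : ∃ m, t = m + 1 := ⟨t - 1, by omega⟩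
            have he : ∑ s ∈ range (m + 1 + 1), β ^ (m + 1 - s) * ‖δ ((s : ℤ) - 1)‖ = d m := by
              rw [Finset.sum_range_succ']
              have h00 : ((0 : ℕ) : ℤ) - 1 = -1 := by norm_num
              rw [h00, h0]
              simp only [norm_zero, mul_zero, add_zero, hd_def]
              refine Finset.sum_congr rfl fun u hu => ?_
              have h1 : m + 1 - (u + 1) = m - u := by omega
              have h2 : ((u + 1 : ℕ) : ℤ) - 1 = (u : ℤ) := by push_cast; ring
              rw [h1, h2]
            rw [he]
            simp [hP_def]
  have key : ∀ t, ‖∑ s ∈ range (t + 1), β ^ (t - s) • (δ ((s : ℤ) - 1) - δ (s : ℤ))‖ ^ 2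
      ≤ 2 * (P t) ^ 2 + 2 * (d t) ^ 2 := by
    intro t
    have hsq : ‖∑ s ∈ range (t + 1), β ^ (t - s) • (δ ((s : ℤ) - 1) - δ (s : ℤ))‖ ^ 2
        ≤ (P t + d t) ^ 2 := pow_le_pow_left₀ (norm_nonneg _) (hnorm t) 2
    nlinarith [sq_nonneg (P t - d t)]
  have hPsum : ∑ t ∈ range (T + 1), (P t) ^ 2 ≤ ∑ t ∈ range (T + 1), (d t) ^ 2 := by
    rw [Finset.sum_range_succ' (fun t => (P t) ^ 2) T]
    simp only [hP_def, if_pos rfl]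
    norm_num
    calc ∑ t ∈ range T, (P (t + 1)) ^ 2 = ∑ t ∈ range T, (d t) ^ 2 := by
          refine Finset.sum_congr rfl fun t _ => ?_
          simp [hP_def]
      _ ≤ ∑ t ∈ range (T + 1), (d t) ^ 2 := by
          refine Finset.sum_le_sum_of_subset_of_nonneg ?_ fun i _ _ => sq_nonneg _
          exact Finset.range_subset_range.mpr (by omega)
  calc ∑ t ∈ range (T + 1), ‖∑ s ∈ range (t + 1), β ^ (t - s) • (δ ((s : ℤ) - 1) - δ (s : ℤ))‖ ^ 2
      ≤ ∑ t ∈ range (T + 1), (2 * (P t) ^ 2 + 2 * (d t) ^ 2) :=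
        Finset.sum_le_sum fun t _ => key t
    _ = 2 * ∑ t ∈ range (T + 1), (P t) ^ 2 + 2 * ∑ t ∈ range (T + 1), (d t) ^ 2 := by
        rw [Finset.sum_add_distrib, Finset.mul_sum, Finset.mul_sum]
    _ ≤ 4 * ∑ t ∈ range (T + 1), (d t) ^ 2 := by linarith
    _ ≤ 4 * ((1 / (1 - β)) ^ 2 * ∑ s ∈ range (T + 1), a s ^ 2) := by
        have := conv_sq hβ0 hβ1 a ha T
        linarith
    _ = (4 / (1 - β) ^ 2) * ∑ s ∈ range (T + 1), ‖δ (s : ℤ)‖ ^ 2 := by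
        have hne : (1 : ℝ) - β ≠ 0 := by linarith
        rw [ha_def]
        field_simp
end

section
/- Let E be a real vector space, let n ≥ 1 be an integer, β ∈ ℝ, and let r ∈ ℝ (the scaling-coefficient ratio c_{t−2}/c_{t−1}). Fix vectors m_t ∈ E, g_t^{(1)}, …, g_t^{(n)} ∈ E, worker errors δ_t^{(1)}, …, δ_t^{(n)} ∈ E, a server error δ_t ∈ E, compressed vectors m̂^{(1)}, …, m̂^{(n)} ∈ E and m_{t+1} ∈ E. Define, for each i, the local momentum m_t^{(i)} := β m_t + (1−β) g_t^{(i)} and the new worker error δ_{t+1}^{(i)} := m_t^{(i)} + r δ_t^{(i)} − m̂^{(i)}; define the server average m_{t+1/2} := (1/n) Σ_{i=1}^n m̂^{(i)} and the new server error δ_{t+1} := m_{t+1/2} + r δ_t − m_{t+1}. Then, with δ̄_t := (1/n) Σ_{i=1}^n δ_t^{(i)} + δ_t and δ̄_{t+1} := (1/n) Σ_{i=1}^n δ_{t+1}^{(i)} + δ_{t+1}, it holds that m_{t+1} = β m_t + ((1−β)/n) Σ_{i=1}^n g_t^{(i)} + r δ̄_t − δ̄_{t+1}. -/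
open Finset

/-- **Two-level error-compensated compression is one-level.** The worker-then-server
error-compensated compression scheme of 1-bit LAMB is equivalent to an error-compensated
momentum update with aggregated compression error `δ̄_t = (1/n) ∑_i δ_t^{(i)} + δ_t`. -/
theorem two_level_error_compensation_eq_one_level
    {E : Type*} [AddCommGroup E] [Module ℝ E]
    (n : ℕ) (hn : 1 ≤ n) (β r : ℝ)
    (mt : E) (g δw : Fin n → E) (δs : E) (mhat : Fin n → E) (mnext : E)
    (mloc : Fin n → E) (hmloc : ∀ i, mloc i = β • mt + (1 - β) • g i)
    (δw' : Fin n → E) (hδw' : ∀ i, δw' i = mloc i + r • δw i - mhat i)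
    (mhalf : E) (hmhalf : mhalf = ((1 : ℝ) / n) • ∑ i, mhat i)
    (δs' : E) (hδs' : δs' = mhalf + r • δs - mnext)
    (δbar : E) (hδbar : δbar = ((1 : ℝ) / n) • ∑ i, δw i + δs)
    (δbar' : E) (hδbar' : δbar' = ((1 : ℝ) / n) • ∑ i, δw' i + δs') :
    mnext = β • mt + ((1 - β) / n) • ∑ i, g i + r • δbar - δbar' := by
  have hn' : (n : ℝ) ≠ 0 := Nat.cast_ne_zero.mpr (by omega)
  have h1 : ∑ i, δw' i
      = (n : ℝ) • (β • mt) + (1 - β) • ∑ i, g i + r • ∑ i, δw i - ∑ i, mhat i := by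
    simp only [hδw', hmloc, Finset.sum_sub_distrib, Finset.sum_add_distrib,
      ← Finset.smul_sum, Finset.sum_const, card_univ, Fintype.card_fin,
      ← Nat.cast_smul_eq_nsmul ℝ]
    module
  subst hδbar' hδbar hδs' hmhalf
  rw [h1]
  match_scalars <;> field_simp <;> ring
end
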